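/- Assume the continuum hypothesis 2^{ℵ₀} = ℵ₁. Then the Muchnik lattice has a chain of cardinality 2^{2^{ℵ₀}}: there exists a family ℱ of mass problems of cardinality 2^{2^{ℵ₀}} that is linearly ordered by ≤_w and such that any two distinct members of ℱ are not Muchnik equivalent. -/

import Mathlib

open Cardinal

namespace Muchnik

/-- Oracle partial recursiveness: `f` is partial recursive relative to the oracle `g`. -/
inductive RecursiveIn (g : ℕ → ℕ) : (ℕ →. ℕ) → Prop
  | oracle : RecursiveIn g ↑g
  | zero : RecursiveIn g (pure 0)
  | succ : RecursiveIn g ↑Nat.succ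
  | left : RecursiveIn g ↑fun n : ℕ => n.unpair.1
  | right : RecursiveIn g ↑fun n : ℕ => n.unpair.2
  | pair {f h} : RecursiveIn g f → RecursiveIn g h →
      RecursiveIn g fun n => Nat.pair <$> f n <*> h n
  | comp {f h} : RecursiveIn g f → RecursiveIn g h →
      RecursiveIn g fun n => h n >>= f
  | prec {f h} : RecursiveIn g f → RecursiveIn g h →
      RecursiveIn g (Nat.unpaired fun a n =>
        n.rec (f a) fun y IH => do let i ← IH; h (Nat.pair a (Nat.pair y i)))
  | rfind {f} : RecursiveIn g f →
      RecursiveIn g fun a => Nat.rfind fun n => (fun m => m = 0) <$> f (Nat.pair a n)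

/-- Turing reducibility `f ≤_T g` for elements of Baire space. -/
def TuringLe (f g : ℕ → ℕ) : Prop := RecursiveIn g ↑f

/-- Strict Turing reducibility `f <_T g`. -/
def TuringLt (f g : ℕ → ℕ) : Prop := TuringLe f g ∧ ¬ TuringLe g f

/-- Turing equivalence `f ≡_T g`. -/
def TuringEquiv (f g : ℕ → ℕ) : Prop := TuringLe f g ∧ TuringLe g f

/-- Turing incomparability `f |_T g`. -/
def TuringIncomp (f g : ℕ → ℕ) : Prop := ¬ TuringLe f g ∧ ¬ TuringLe g f

/-- Muchnik reducibility `A ≤_w B` between mass problems. -/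
def MuchnikLe (A B : Set (ℕ → ℕ)) : Prop := ∀ f ∈ B, ∃ g ∈ A, TuringLe g f

/-- Strict Muchnik reducibility `A <_w B`. -/
def MuchnikLt (A B : Set (ℕ → ℕ)) : Prop := MuchnikLe A B ∧ ¬ MuchnikLe B A

/-- Muchnik equivalence `A ≡_w B`. -/
def MuchnikEquiv (A B : Set (ℕ → ℕ)) : Prop := MuchnikLe A B ∧ MuchnikLe B A

/-- The strict Turing upper cone `C'(f) = {g : f <_T g}`. -/
def cone (f : ℕ → ℕ) : Set (ℕ → ℕ) := {g | TuringLt f g}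

/-- The recursive join `f ⊕ g`: `(f ⊕ g)(2x) = f(x)` and `(f ⊕ g)(2x+1) = g(x)`. -/
def join (f g : ℕ → ℕ) : ℕ → ℕ := fun n => if n % 2 = 0 then f (n / 2) else g (n / 2)

/-- The join `A + B` of mass problems. -/
def joinSet (A B : Set (ℕ → ℕ)) : Set (ℕ → ℕ) := {h | ∃ f ∈ A, ∃ g ∈ B, h = join f g}

/-- Identification of `2^ω` with a subset of Baire space. -/
def ofBool (X : ℕ → Bool) : ℕ → ℕ := fun n => if X n then 1 else 0


inductive Code : Type
  | oracle : Code
  | zero : Code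
  | succ : Code
  | left : Code
  | right : Code
  | pair : Code → Code → Code
  | comp : Code → Code → Code
  | prec : Code → Code → Code
  | rfind : Code → Code

def eval (g : ℕ → ℕ) : Code → (ℕ →. ℕ)
  | .oracle => ↑g
  | .zero => pure 0
  | .succ => ↑Nat.succ
  | .left => ↑fun n : ℕ => n.unpair.1
  | .right => ↑fun n : ℕ => n.unpair.2
  | .pair c d => fun n => Nat.pair <$> eval g c n <*> eval g d n
  | .comp c d => fun n => eval g d n >>= eval g c
  | .prec c d => Nat.unpaired fun a n =>
      n.rec (eval g c a) fun y IH => do let i ← IH; eval g d (Nat.pair a (Nat.pair y i))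
  | .rfind c => fun a => Nat.rfind fun n => (fun m => m = 0) <$> eval g c (Nat.pair a n)

theorem exists_code {g : ℕ → ℕ} {p : ℕ →. ℕ} (h : RecursiveIn g p) :
    ∃ c : Code, eval g c = p := by
  induction h with
  | oracle => exact ⟨.oracle, rfl⟩
  | zero => exact ⟨.zero, rfl⟩
  | succ => exact ⟨.succ, rfl⟩
  | left => exact ⟨.left, rfl⟩
  | right => exact ⟨.right, rfl⟩
  | pair _ _ ihf ihh =>
      obtain ⟨c, rfl⟩ := ihf; obtain ⟨d, rfl⟩ := ihh
      exact ⟨.pair c d, rfl⟩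
  | comp _ _ ihf ihh =>
      obtain ⟨c, rfl⟩ := ihf; obtain ⟨d, rfl⟩ := ihh
      exact ⟨.comp c d, rfl⟩
  | prec _ _ ihf ihh =>
      obtain ⟨c, rfl⟩ := ihf; obtain ⟨d, rfl⟩ := ihh
      exact ⟨.prec c d, rfl⟩
  | rfind _ ihf =>
      obtain ⟨c, rfl⟩ := ihf
      exact ⟨.rfind c, rfl⟩

theorem turingLe_refl (f : ℕ → ℕ) : TuringLe f f := RecursiveIn.oracle

theorem recursiveIn_of_le {g h : ℕ → ℕ} {p : ℕ →. ℕ}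
    (hp : RecursiveIn g p) (hg : TuringLe g h) : RecursiveIn h p := by
  induction hp with
  | oracle => exact hg
  | zero => exact .zero
  | succ => exact .succ
  | left => exact .left
  | right => exact .right
  | pair _ _ ih1 ih2 => exact .pair ih1 ih2
  | comp _ _ ih1 ih2 => exact .comp ih1 ih2
  | prec _ _ ih1 ih2 => exact .prec ih1 ih2
  | rfind _ ih => exact .rfind ih

theorem turingLe_trans {f g h : ℕ → ℕ} (h1 : TuringLe f g) (h2 : TuringLe g h) :
    TuringLe f h := recursiveIn_of_le h1 h2


def decodeC : ℕ → Code
  | 0 => .oracle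
  | 1 => .zero
  | 2 => .succ
  | 3 => .left
  | 4 => .right
  | n + 5 =>
    let m := n / 4
    have hm : m < n + 5 := by omega
    have _m1 : m.unpair.1 < n + 5 := lt_of_le_of_lt m.unpair_left_le hm
    have _m2 : m.unpair.2 < n + 5 := lt_of_le_of_lt m.unpair_right_le hm
    match n % 4 with
    | 0 => .pair (decodeC m.unpair.1) (decodeC m.unpair.2)
    | 1 => .comp (decodeC m.unpair.1) (decodeC m.unpair.2)
    | 2 => .prec (decodeC m.unpair.1) (decodeC m.unpair.2)
    | _ => .rfind (decodeC m)
decreasing_by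
  all_goals
    have := Nat.unpair_left_le (n / 4)
    have := Nat.unpair_right_le (n / 4)
    omega

theorem decodeC_surj : Function.Surjective decodeC := by
  intro c
  induction c with
  | oracle => exact ⟨0, by simp [decodeC]⟩
  | zero => exact ⟨1, by simp [decodeC]⟩
  | succ => exact ⟨2, by simp [decodeC]⟩
  | left => exact ⟨3, by simp [decodeC]⟩
  | right => exact ⟨4, by simp [decodeC]⟩
  | pair c d ihc ihd =>
      obtain ⟨n1, rfl⟩ := ihc; obtain ⟨n2, rfl⟩ := ihd
      refine ⟨4 * Nat.pair n1 n2 + 5, ?_⟩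
      have h4 : (4 * Nat.pair n1 n2) % 4 = 0 := by omega
      have h5 : (4 * Nat.pair n1 n2) / 4 = Nat.pair n1 n2 := by omega
      simp [decodeC, h4, h5]
  | comp c d ihc ihd =>
      obtain ⟨n1, rfl⟩ := ihc; obtain ⟨n2, rfl⟩ := ihd
      refine ⟨4 * Nat.pair n1 n2 + 1 + 5, ?_⟩
      have h4 : (4 * Nat.pair n1 n2 + 1) % 4 = 1 := by omega
      have h5 : (4 * Nat.pair n1 n2 + 1) / 4 = Nat.pair n1 n2 := by omega
      simp [decodeC, h4, h5]
  | prec c d ihc ihd =>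
      obtain ⟨n1, rfl⟩ := ihc; obtain ⟨n2, rfl⟩ := ihd
      refine ⟨4 * Nat.pair n1 n2 + 2 + 5, ?_⟩
      have h4 : (4 * Nat.pair n1 n2 + 2) % 4 = 2 := by omega
      have h5 : (4 * Nat.pair n1 n2 + 2) / 4 = Nat.pair n1 n2 := by omega
      simp [decodeC, h4, h5]
  | rfind c ihc =>
      obtain ⟨n1, rfl⟩ := ihc
      refine ⟨4 * n1 + 3 + 5, ?_⟩
      have h4 : (4 * n1 + 3) % 4 = 3 := by omega
      have h5 : (4 * n1 + 3) / 4 = n1 := by omega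
      simp [decodeC, h4, h5]

/-- scheduling: every code appears at arbitrarily large indices -/
def sched : ℕ → Code := fun k => decodeC k.unpair.1

theorem sched_hits (c : Code) (N : ℕ) : ∃ k, N ≤ k ∧ sched k = c := by
  obtain ⟨n, rfl⟩ := decodeC_surj c
  refine ⟨Nat.pair n N, ?_, ?_⟩
  · exact (Nat.right_le_pair n N)
  · simp [sched]


theorem use_principle {g : ℕ → ℕ} (c : Code) : ∀ {n m : ℕ}, m ∈ eval g c n →
    ∃ u, ∀ g' : ℕ → ℕ, (∀ k, k < u → g' k = g k) → m ∈ eval g' c n := by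
  induction c with
  | oracle =>
      intro n m h
      simp only [eval, PFun.coe_val, Part.mem_some_iff] at h ⊢
      refine ⟨n + 1, fun g' hg' => ?_⟩
      rw [hg' n (by omega)]; exact h
  | zero => intro n m h; exact ⟨0, fun g' _ => h⟩
  | succ => intro n m h; exact ⟨0, fun g' _ => h⟩
  | left => intro n m h; exact ⟨0, fun g' _ => h⟩
  | right => intro n m h; exact ⟨0, fun g' _ => h⟩
  | pair c d ihc ihd =>
      intro n m h
      simp only [eval, Seq.seq, Part.map_eq_map, Part.bind_eq_bind, Part.mem_bind_iff,
        Part.mem_map_iff] at h ⊢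
      obtain ⟨fp, ⟨a, ha, rfl⟩, b, hb, hm⟩ := h
      obtain ⟨u1, hu1⟩ := ihc ha
      obtain ⟨u2, hu2⟩ := ihd hb
      refine ⟨max u1 u2, fun g' hg' => ?_⟩
      exact ⟨Nat.pair a, ⟨a, hu1 g' (fun k hk => hg' k (lt_of_lt_of_le hk (le_max_left _ _))), rfl⟩,
        b, hu2 g' (fun k hk => hg' k (lt_of_lt_of_le hk (le_max_right _ _))), hm⟩
  | comp c d ihc ihd =>
      intro n m h
      simp only [eval, Part.bind_eq_bind, Part.mem_bind_iff] at h ⊢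
      obtain ⟨a, ha, hm⟩ := Part.mem_bind_iff.1 h
      obtain ⟨u1, hu1⟩ := ihd ha
      obtain ⟨u2, hu2⟩ := ihc hm
      refine ⟨max u1 u2, fun g' hg' => ?_⟩
      exact Part.mem_bind_iff.2 ⟨a, hu1 g' (fun k hk => hg' k (lt_of_lt_of_le hk (le_max_left _ _))),
        hu2 g' (fun k hk => hg' k (lt_of_lt_of_le hk (le_max_right _ _)))⟩
  | prec c d ihc ihd =>
      intro n m h
      simp only [eval, Nat.unpaired] at h ⊢
      obtain ⟨a, k, e⟩ : ∃ a k, n.unpair = (a, k) := ⟨n.unpair.1, n.unpair.2, rfl⟩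
      rw [e] at h ⊢
      simp only at h ⊢
      clear e
      induction k generalizing m with
      | zero =>
          obtain ⟨u, hu⟩ := ihc h
          exact ⟨u, fun g' hg' => hu g' hg'⟩
      | succ k ihk =>
          have h2 : ∃ i ∈ (Nat.rec (eval g c a) (fun y IH => IH.bind fun i =>
              eval g d (Nat.pair a (Nat.pair y i))) k : Part ℕ),
              m ∈ eval g d (Nat.pair a (Nat.pair k i)) := Part.mem_bind_iff.1 h
          obtain ⟨i, hi, hm⟩ := h2
          obtain ⟨u1, hu1⟩ := ihk hi
          obtain ⟨u2, hu2⟩ := ihd hm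
          refine ⟨max u1 u2, fun g' hg' => ?_⟩
          exact Part.mem_bind_iff.2 ⟨i, hu1 g' (fun j hj => hg' j (lt_of_lt_of_le hj (le_max_left _ _))),
            hu2 g' (fun j hj => hg' j (lt_of_lt_of_le hj (le_max_right _ _)))⟩
  | rfind c ihc =>
      intro n m h
      simp only [eval] at h ⊢
      obtain ⟨htrue, hmin⟩ := Nat.mem_rfind.1 h
      have key : ∀ k, ∃ u, k ≤ m → ∀ g' : ℕ → ℕ, (∀ j, j < u → g' j = g j) →
          ∃ v, v ∈ eval g' c (Nat.pair n k) ∧ ((v = 0) ↔ (k = m)) := by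
        intro k
        rcases lt_trichotomy k m with hk | hk | hk
        · have := hmin hk
          rw [Part.map_eq_map, Part.mem_map_iff] at this
          obtain ⟨v, hv, hvb⟩ := this
          have hv0 : ¬ (v = 0) := by simpa using hvb
          obtain ⟨u, hu⟩ := ihc hv
          exact ⟨u, fun _ g' hg' => ⟨v, hu g' hg', by simp [hv0]; omega⟩⟩
        · subst hk
          rw [Part.map_eq_map, Part.mem_map_iff] at htrue
          obtain ⟨v, hv, hvb⟩ := htrue
          have hv0 : v = 0 := by simpa using hvb
          obtain ⟨u, hu⟩ := ihc hv
          exact ⟨u, fun _ g' hg' => ⟨v, hu g' hg', by simp [hv0]⟩⟩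
        · exact ⟨0, fun hk' => absurd hk' (by omega)⟩
      choose uf huf using key
      set U := (Finset.range (m + 1)).sup uf with hU
      refine ⟨U, fun g' hg' => ?_⟩
      have hagree : ∀ k, k ≤ m → ∀ j, j < uf k → g' j = g j := by
        intro k hk j hj
        exact hg' j (lt_of_lt_of_le hj (Finset.le_sup (Finset.mem_range.2 (by omega))))
      apply Nat.mem_rfind.2
      constructor
      · obtain ⟨v, hv, hv0⟩ := huf m le_rfl g' (hagree m le_rfl)
        rw [Part.map_eq_map, Part.mem_map_iff]
        exact ⟨v, hv, by simp [hv0.2 rfl]⟩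
      · intro k hk
        obtain ⟨v, hv, hv0⟩ := huf k (le_of_lt hk) g' (hagree k (le_of_lt hk))
        rw [Part.map_eq_map, Part.mem_map_iff]
        refine ⟨v, hv, ?_⟩
        have : ¬ (v = 0) := fun h0 => absurd (hv0.1 h0) (by omega)
        simp [this]

def ext (σ : List ℕ) : ℕ → ℕ := fun i => σ.getD i 0

def Ext (σ : List ℕ) (x : ℕ → ℕ) : Prop := ∀ i, i < σ.length → x i = σ.getD i 0

theorem Ext.mono {σ σ' : List ℕ} {x : ℕ → ℕ} (h : σ <+: σ') (hx : Ext σ' x) : Ext σ x := by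
  intro i hi
  have hlen : i < σ'.length := lt_of_lt_of_le hi h.length_le
  rw [hx i hlen, List.getD_eq_getElem _ _ hlen, List.getD_eq_getElem _ _ hi, h.getElem hi]

def Guard (c : Code) (σ τ : List ℕ) : Prop :=
  ∀ x y : ℕ → ℕ, Ext σ x → Ext τ y → eval x c ≠ ↑y

theorem Guard.mono {c σ τ σ' τ'} (h : Guard c σ τ) (h1 : σ <+: σ') (h2 : τ <+: τ') :
    Guard c σ' τ' := fun x y hx hy => h x y (Ext.mono h1 hx) (Ext.mono h2 hy)

theorem step_exists (c : Code) (σ τ : List ℕ) :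
    ∃ σ' τ', σ <+: σ' ∧ τ <+: τ' ∧ Guard c σ' τ' := by
  by_cases h : ∃ ρ : List ℕ, σ <+: ρ ∧ ∃ m, m ∈ eval (ext ρ) c τ.length
  · obtain ⟨ρ, hρ, m, hm⟩ := h
    obtain ⟨u, hu⟩ := use_principle c hm
    refine ⟨ρ ++ List.replicate u 0, τ ++ [m + 1],
      hρ.trans (List.prefix_append _ _), List.prefix_append _ _, ?_⟩
    intro x y hx hy hxy
    have hylen : τ.length < (τ ++ [m + 1]).length := by simp
    have hyv : y τ.length = m + 1 := by
      rw [hy τ.length hylen, List.getD_append_right _ _ _ _ le_rfl]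
      simp
    have hmx : m ∈ eval x c τ.length := by
      apply hu
      intro k hk
      rcases lt_or_ge k ρ.length with hkρ | hkρ
      · have hk2 : k < (ρ ++ List.replicate u 0).length := by simp; omega
        rw [hx k hk2, List.getD_append _ _ _ _ hkρ]
        rfl
      · have hk2 : k < (ρ ++ List.replicate u 0).length := by simp; omega
        rw [hx k hk2, List.getD_append_right _ _ _ _ hkρ]
        show List.getD _ _ _ = ext ρ k
        have h1 : (List.replicate u 0).getD (k - ρ.length) 0 = 0 := by
          rw [List.getD_eq_getElem _ _ (by simp; omega)]
          simp
        have h2 : ext ρ k = 0 := by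
          unfold ext
          rw [List.getD_eq_default _ _ hkρ]
        rw [h1, h2]
    rw [hxy] at hmx
    have : m = y τ.length := by
      have := Part.mem_some_iff.1 (by simpa [PFun.coe_val] using hmx)
      exact this
    omega
  · push_neg at h
    refine ⟨σ, τ, List.prefix_refl _, List.prefix_refl _, ?_⟩
    intro x y hx _ heq
    have hmem : y τ.length ∈ eval x c τ.length := by
      rw [heq]; simp [PFun.coe_val]
    obtain ⟨u, hu⟩ := use_principle c hmem
    set L := max u σ.length with hL
    set ρ := σ ++ List.ofFn (fun i : Fin (L - σ.length) => x (σ.length + i)) with hρ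
    have hpre : σ <+: ρ := List.prefix_append _ _
    have hforce : y τ.length ∈ eval (ext ρ) c τ.length := by
      apply hu
      intro k hk
      have hkL : k < L := lt_of_lt_of_le hk (le_max_left _ _)
      unfold ρ
      unfold ext
      rcases lt_or_ge k σ.length with hkσ | hkσ
      · rw [List.getD_append _ _ _ _ hkσ]
        exact (hx k hkσ).symm
      · rw [List.getD_append_right _ _ _ _ hkσ]
        have hk2 : k - σ.length < L - σ.length := by omega
        rw [List.getD_eq_getElem _ _ (by simpa using hk2)]
        simp only [List.getElem_ofFn]
        congr 1
        omega
    exact h ρ hpre (y τ.length) hforce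

/-! ### processing one pair -/

noncomputable def procPair (c : Code) (pq : List Bool × List Bool)
    (f : List Bool → List ℕ) : List Bool → List ℕ :=
  if _h : pq.1 = pq.2 then f
  else fun t =>
    if t = pq.1 then (step_exists c (f pq.1) (f pq.2)).choose
    else if t = pq.2 then (step_exists c (f pq.1) (f pq.2)).choose_spec.choose
    else f t

theorem procPair_ext (c pq f) : ∀ t, f t <+: procPair c pq f t := by
  intro t
  obtain ⟨h1, h2, _⟩ := (step_exists c (f pq.1) (f pq.2)).choose_spec.choose_spec
  unfold procPair
  by_cases h : pq.1 = pq.2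
  · rw [dif_pos h]
  · rw [dif_neg h]
    by_cases ht1 : t = pq.1
    · rw [if_pos ht1, ht1]; exact h1
    · rw [if_neg ht1]
      by_cases ht2 : t = pq.2
      · rw [if_pos ht2, ht2]; exact h2
      · rw [if_neg ht2]

theorem procPair_guard (c pq f) (hne : pq.1 ≠ pq.2) :
    Guard c (procPair c pq f pq.1) (procPair c pq f pq.2) := by
  obtain ⟨_, _, h3⟩ := (step_exists c (f pq.1) (f pq.2)).choose_spec.choose_spec
  unfold procPair
  rw [dif_neg hne]
  rw [if_pos rfl, if_neg (Ne.symm hne), if_pos rfl]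
  exact h3

noncomputable def procList (c : Code) : List (List Bool × List Bool) →
    (List Bool → List ℕ) → (List Bool → List ℕ)
  | [], f => f
  | pq :: l, f => procList c l (procPair c pq f)

theorem procList_ext (c) : ∀ (l) (f) (t), f t <+: procList c l f t := by
  intro l
  induction l with
  | nil => intro f t; exact List.prefix_refl _
  | cons pq l ih =>
      intro f t
      exact (procPair_ext c pq f t).trans (ih (procPair c pq f) t)

theorem procList_guard (c) : ∀ (l) (f) (pq), pq ∈ l → pq.1 ≠ pq.2 →
    Guard c (procList c l f pq.1) (procList c l f pq.2) := by
  intro l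
  induction l with
  | nil => intro f pq h; exact absurd h List.not_mem_nil
  | cons pq0 l ih =>
      intro f pq hmem hne
      rcases List.mem_cons.1 hmem with h | h
      · subst h
        have hg := procPair_guard c pq f hne
        exact hg.mono (procList_ext c l _ pq.1) (procList_ext c l _ pq.2)
      · exact ih (procPair c pq0 f) pq h hne

/-! ### strings -/

def allStrings : ℕ → List (List Bool)
  | 0 => [[]]
  | n + 1 => (allStrings n).flatMap fun t => [t ++ [false], t ++ [true]]

theorem mem_allStrings : ∀ (n) (t : List Bool), t ∈ allStrings n ↔ t.length = n := by
  intro n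
  induction n with
  | zero => intro t; simp [allStrings, List.length_eq_zero_iff]
  | succ n ih =>
      intro t
      simp only [allStrings, List.mem_flatMap]
      constructor
      · rintro ⟨s, hs, ht⟩
        have hl := (ih s).1 hs
        rcases List.mem_pair.1 ht with h | h
        · subst h; simp [hl]
        · subst h; simp [hl]
      · intro hlen
        have hne : t ≠ [] := by intro h; subst h; simp at hlen
        refine ⟨t.dropLast, (ih _).2 (by simp [hlen]), ?_⟩
        have h2 : t = t.dropLast ++ [t.getLast hne] := (List.dropLast_concat_getLast hne).symm
        rw [List.mem_pair]
        cases hb : t.getLast hne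
        · rw [hb] at h2; exact Or.inl h2
        · rw [hb] at h2; exact Or.inr h2

def pairsL (n : ℕ) : List (List Bool × List Bool) :=
  (allStrings n).flatMap fun p => (allStrings n).map fun q => (p, q)

theorem mem_pairsL {n : ℕ} {p q : List Bool} (hp : p.length = n) (hq : q.length = n) :
    (p, q) ∈ pairsL n := by
  unfold pairsL
  rw [List.mem_flatMap]
  exact ⟨p, (mem_allStrings n p).2 hp, List.mem_map.2 ⟨q, (mem_allStrings n q).2 hq, rfl⟩⟩

/-! ### levels of the tree -/

noncomputable def lvl : ℕ → (List Bool → List ℕ)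
  | 0 => fun _ => []
  | n + 1 => procList (sched n) (pairsL (n + 1))
      (fun t => lvl n t.dropLast ++ [if t.getLast? = some true then 1 else 0])

def res (X : ℕ → Bool) : ℕ → List Bool
  | 0 => []
  | n + 1 => res X n ++ [X n]

theorem res_length (X n) : (res X n).length = n := by
  induction n with
  | zero => rfl
  | succ n ih => simp [res, ih]

theorem res_getD (X : ℕ → Bool) : ∀ n i, i < n → (res X n).getD i false = X i := by
  intro n
  induction n with
  | zero => intro i h; omega
  | succ n ih =>
      intro i h
      rcases lt_or_ge i n with h2 | h2
      · rw [show res X (n+1) = res X n ++ [X n] from rfl,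
          List.getD_append _ _ _ _ (by rw [res_length]; exact h2)]
        exact ih i h2
      · have hi : i = n := by omega
        subst hi
        rw [show res X (i+1) = res X i ++ [X i] from rfl,
          List.getD_append_right _ _ _ _ (by rw [res_length])]
        simp [res_length]

theorem res_ne {X Y : ℕ → Bool} {j : ℕ} (h : X j ≠ Y j) {n : ℕ} (hn : j < n) :
    res X n ≠ res Y n := by
  intro heq
  apply h
  have h1 := res_getD X n j hn
  rw [heq] at h1
  rw [← h1, res_getD Y n j hn]

theorem lvl_succ_pre (X : ℕ → Bool) (n : ℕ) :
    lvl n (res X n) ++ [if X n then 1 else 0] <+: lvl (n + 1) (res X (n + 1)) := by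
  have hbase : lvl n (res X (n+1)).dropLast ++ [if (res X (n+1)).getLast? = some true then 1 else 0]
      = lvl n (res X n) ++ [if X n then 1 else 0] := by
    rw [show res X (n+1) = res X n ++ [X n] from rfl]
    rw [List.dropLast_concat, List.getLast?_concat]
    cases h : X n <;> simp
  have hstep := procList_ext (sched n) (pairsL (n + 1))
      (fun t => lvl n t.dropLast ++ [if t.getLast? = some true then 1 else 0]) (res X (n+1))
  rw [hbase] at hstep
  exact hstep

theorem lvl_pre (X : ℕ → Bool) : ∀ {m n : ℕ}, m ≤ n →
    lvl m (res X m) <+: lvl n (res X n) := by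
  intro m n h
  induction n with
  | zero => have : m = 0 := by omega
            subst this; exact List.prefix_refl _
  | succ n ih =>
      rcases Nat.lt_or_ge m (n+1) with h2 | h2
      · exact (ih (by omega)).trans
          ((List.prefix_append _ _).trans (lvl_succ_pre X n))
      · have : m = n + 1 := by omega
        subst this; exact List.prefix_refl _

theorem lvl_len (X : ℕ → Bool) (n : ℕ) : n ≤ (lvl n (res X n)).length := by
  induction n with
  | zero => omega
  | succ n ih =>
      have h1 := (lvl_succ_pre X n).length_le
      simp only [List.length_append, List.length_cons] at h1
      omega

/-! ### the embedding -/

noncomputable def theta (X : ℕ → Bool) : ℕ → ℕ :=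
  fun n => (lvl (n + 1) (res X (n + 1))).getD n 0

theorem theta_ext (X : ℕ → Bool) (n : ℕ) : Ext (lvl n (res X n)) (theta X) := by
  intro i hi
  unfold theta
  rcases le_total (i + 1) n with h | h
  · have hpre := lvl_pre X h
    have hl : i < (lvl (i+1) (res X (i+1))).length := lt_of_lt_of_le (by omega) (lvl_len X (i+1))
    rw [List.getD_eq_getElem _ _ hl, List.getD_eq_getElem _ _ hi, hpre.getElem hl]
  · have hpre := lvl_pre X h
    have hl : i < (lvl (i+1) (res X (i+1))).length := lt_of_lt_of_le hi hpre.length_le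
    rw [List.getD_eq_getElem _ _ hl, List.getD_eq_getElem _ _ hi, hpre.getElem hi]

theorem theta_incomp {X Y : ℕ → Bool} (h : X ≠ Y) (c : Code) :
    eval (theta X) c ≠ ↑(theta Y) := by
  have ⟨j, hj⟩ : ∃ j, X j ≠ Y j := by
    by_contra hc
    push_neg at hc
    exact h (funext hc)
  obtain ⟨k, hk, hsched⟩ := sched_hits c (j + 1)
  have hne : res X (k + 1) ≠ res Y (k + 1) := res_ne hj (by omega)
  have hmem := mem_pairsL (res_length X (k+1)) (res_length Y (k+1))
  have hguard := procList_guard (sched k) (pairsL (k+1))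
      (fun t => lvl k t.dropLast ++ [if t.getLast? = some true then 1 else 0])
      (res X (k+1), res Y (k+1)) hmem hne
  subst hsched
  have hx := theta_ext X (k+1)
  have hy := theta_ext Y (k+1)
  exact hguard (theta X) (theta Y) hx hy



theorem theta_incomp' {X Y : ℕ → Bool} (h : X ≠ Y) : ¬ TuringLe (theta Y) (theta X) := by
  intro htl
  obtain ⟨c, hc⟩ := exists_code htl
  exact theta_incomp h c hc

noncomputable section

def O : Type := (Cardinal.aleph 1).ord.ToType

noncomputable instance : LinearOrder O := linearOrder_toType _
instance : WellFoundedLT O := wellFoundedLT_toType _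

theorem mk_O : #O = Cardinal.aleph 1 := Cardinal.mk_ord_toType _

theorem countable_Iic (γ : O) : (Set.Iic γ).Countable := by
  have h1 : #(Set.Iio γ) < Cardinal.aleph 1 := Cardinal.mk_Iio_ord_toType γ
  have h2 : (Set.Iio γ).Countable := (Cardinal.countable_iff_lt_aleph_one _).2 h1
  have : Set.Iic γ = Set.Iio γ ∪ {γ} := by
    ext o; simp [le_iff_lt_or_eq]
  rw [this]
  exact h2.union (Set.countable_singleton γ)

/-! ### lex order -/

def ltL (x y : O → Bool) : Prop :=
  ∃ γ, (∀ δ, δ < γ → x δ = y δ) ∧ x γ = false ∧ y γ = true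

def leL (x y : O → Bool) : Prop := ltL x y ∨ x = y

theorem ltL_irrefl (x : O → Bool) : ¬ ltL x x := by
  rintro ⟨γ, _, h1, h2⟩; rw [h1] at h2; exact Bool.false_ne_true h2

theorem ltL_trans {x y z : O → Bool} (h1 : ltL x y) (h2 : ltL y z) : ltL x z := by
  obtain ⟨γ1, ha1, hx1, hy1⟩ := h1
  obtain ⟨γ2, ha2, hy2, hz2⟩ := h2
  rcases lt_trichotomy γ1 γ2 with h | h | h
  · refine ⟨γ1, fun δ hδ => (ha1 δ hδ).trans (ha2 δ (hδ.trans h)), hx1, ?_⟩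
    rw [← ha2 γ1 h]; exact hy1
  · subst h; rw [hy1] at hy2; exact absurd hy2 (by simp)
  · exact ⟨γ2, fun δ hδ => (ha1 δ (hδ.trans h)).trans (ha2 δ hδ),
      by rw [ha1 γ2 h]; exact hy2, hz2⟩

theorem leL_ltL_trans {x y z : O → Bool} (h1 : leL x y) (h2 : ltL y z) : ltL x z := by
  rcases h1 with h | rfl
  · exact ltL_trans h h2
  · exact h2

theorem ltL_leL_trans {x y z : O → Bool} (h1 : ltL x y) (h2 : leL y z) : ltL x z := by
  rcases h2 with h | rfl
  · exact ltL_trans h1 h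
  · exact h1

theorem leL_trans {x y z : O → Bool} (h1 : leL x y) (h2 : leL y z) : leL x z := by
  rcases h1 with h | rfl
  · exact Or.inl (ltL_leL_trans h h2)
  · exact h2

theorem ltL_total {x y : O → Bool} (h : x ≠ y) : ltL x y ∨ ltL y x := by
  have hne : {o | x o ≠ y o}.Nonempty := by
    by_contra hc
    rw [Set.not_nonempty_iff_eq_empty] at hc
    apply h; funext o
    by_contra ho
    exact absurd (hc ▸ ho : o ∈ ({} : Set O)) (Set.notMem_empty o)
  obtain ⟨γ, hγmem, hγmin⟩ := wellFounded_lt.has_min {o | x o ≠ y o} hne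
  have hagree : ∀ δ, δ < γ → x δ = y δ := by
    intro δ hδ
    by_contra hne'
    exact hγmin δ hne' hδ
  rcases hx : x γ <;> rcases hy : y γ
  · exact absurd (hx.trans hy.symm) hγmem
  · exact Or.inl ⟨γ, hagree, hx, hy⟩
  · exact Or.inr ⟨γ, fun δ hδ => (hagree δ hδ).symm, hy, hx⟩
  · exact absurd (hx.trans hy.symm) hγmem

/-- the witness between `x` and `y` -/
theorem exists_witness {x y : O → Bool} (h : ltL x y) :
    ∃ w : O → Bool, {o | w o = true}.Countable ∧ ltL x w ∧ leL w y := by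
  obtain ⟨γ, hagree, hx, hy⟩ := h
  refine ⟨fun δ => if δ ≤ γ then y δ else false, ?_, ?_, ?_⟩
  · apply (countable_Iic γ).mono
    intro o ho
    simp only [Set.mem_setOf_eq] at ho
    by_contra hno
    rw [if_neg (by simpa [Set.mem_Iic] using hno)] at ho
    exact Bool.false_ne_true ho
  · refine ⟨γ, fun δ hδ => ?_, hx, ?_⟩
    · show x δ = if δ ≤ γ then y δ else false
      rw [if_pos (le_of_lt hδ)]; exact hagree δ hδ
    · show (if γ ≤ γ then y γ else false) = true
      rw [if_pos le_rfl]; exact hy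
  · set w : O → Bool := fun δ => if δ ≤ γ then y δ else false with hw
    rcases eq_or_ne w y with he | hne
    · exact Or.inr he
    · rcases ltL_total hne with h1 | h1
      · exact Or.inl h1
      · exfalso
        obtain ⟨δ, _, hyδ, hwδ⟩ := h1
        rw [hw] at hwδ
        simp only at hwδ
        by_cases hδγ : δ ≤ γ
        · rw [if_pos hδγ] at hwδ
          rw [hyδ] at hwδ
          exact Bool.false_ne_true hwδ
        · rw [if_neg hδγ] at hwδ
          exact Bool.false_ne_true hwδ

/-! ### cardinality of countably supported functions -/

def Bsub : Type := {b : O → Bool // {o | b o = true}.Countable}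

theorem mk_Bsub_le (hCH : (2 : Cardinal.{0}) ^ Cardinal.aleph0 = Cardinal.aleph 1) :
    #Bsub ≤ (2 : Cardinal.{0}) ^ Cardinal.aleph0 := by
  have h1 : #Bsub ≤ #{s : Set O // s.Countable} := by
    apply Cardinal.mk_le_of_injective (f := fun b => ⟨{o | b.1 o = true}, b.2⟩)
    intro b b' h
    apply Subtype.ext
    funext o
    have := congrArg (fun s => o ∈ s.1) h
    simp only [Set.mem_setOf_eq] at this
    rcases hb : b.1 o <;> rcases hb' : b'.1 o
    · rfl
    · rw [hb, hb'] at this; simp at this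
    · rw [hb, hb'] at this; simp at this
    · rfl
  have h2 : #{s : Set O // s.Countable} ≤ #(ℕ → Option O) := by
    apply Cardinal.mk_le_of_surjective
      (f := fun g : ℕ → Option O => (⟨{o | ∃ n, g n = some o}, by
        have : {o | ∃ n, g n = some o} = ⋃ n, {o | g n = some o} := by
          ext o; simp
        rw [this]
        exact Set.countable_iUnion fun n =>
          Set.Subsingleton.countable fun a ha b hb => by
            simp only [Set.mem_setOf_eq] at ha hb
            rw [ha] at hb; exact Option.some_injective _ hb⟩ :
        {s : Set O // s.Countable}))
    rintro ⟨s, hs⟩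
    rcases s.eq_empty_or_nonempty with rfl | hne
    · refine ⟨fun _ => none, ?_⟩
      apply Subtype.ext
      simp
    · obtain ⟨f, rfl⟩ := hs.exists_eq_range hne
      refine ⟨fun n => some (f n), ?_⟩
      apply Subtype.ext
      ext o
      simp [Set.mem_range, eq_comm]
  have h3 : #(ℕ → Option O) = (Cardinal.aleph 1) ^ (Cardinal.aleph0 : Cardinal.{0}) := by
    rw [← Cardinal.power_def, Cardinal.mk_option, mk_O, Cardinal.mk_nat,
      Cardinal.add_one_eq (Cardinal.aleph0_le_aleph 1)]
  have h4 : (Cardinal.aleph 1) ^ (Cardinal.aleph0 : Cardinal.{0}) = (2 : Cardinal.{0}) ^ Cardinal.aleph0 := by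
    rw [← hCH, ← Cardinal.power_mul, Cardinal.aleph0_mul_aleph0]
  calc #Bsub ≤ #{s : Set O // s.Countable} := h1
    _ ≤ #(ℕ → Option O) := h2
    _ = 2 ^ Cardinal.aleph0 := h3.trans h4


end

/-- (CH implies a big chain in the Muchnik lattice.) Assuming the continuum hypothesis
`2 ^ ℵ₀ = ℵ₁`, there is a family of mass problems of cardinality `2 ^ (2 ^ ℵ₀)` that is
linearly ordered by `≤_w` and whose distinct members are pairwise non-Muchnik-equivalent. -/
theorem muchnik_chain_of_CH (hCH : (2 : Cardinal) ^ Cardinal.aleph0 = Cardinal.aleph 1) :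
    ∃ ℱ : Set (Set (ℕ → ℕ)), #ℱ = (2 : Cardinal) ^ ((2 : Cardinal) ^ Cardinal.aleph0) ∧
      (∀ A ∈ ℱ, ∀ B ∈ ℱ, MuchnikLe A B ∨ MuchnikLe B A) ∧
      (∀ A ∈ ℱ, ∀ B ∈ ℱ, A ≠ B → ¬ MuchnikEquiv A B) := by
  classical
  have hCH0 : (2 : Cardinal.{0}) ^ Cardinal.aleph0 = Cardinal.aleph 1 := by
    refine Cardinal.lift_inj.mp ?_
    rw [Cardinal.lift_power, Cardinal.lift_two, Cardinal.lift_aleph0, Cardinal.lift_aleph,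
      Ordinal.lift_one]
    exact hCH
  have hle : #Bsub ≤ #(ℕ → Bool) := by
    have h1 : #(ℕ → Bool) = (2 : Cardinal) ^ Cardinal.aleph0 := by
      rw [← Cardinal.power_def, Cardinal.mk_bool, Cardinal.mk_nat]
    rw [h1]
    exact mk_Bsub_le hCH0
  obtain ⟨j⟩ := (Cardinal.le_def _ _).mp hle
  set gf : Bsub → (ℕ → ℕ) := fun b => theta (j b) with hgf
  have anti : ∀ b b' : Bsub, b ≠ b' → ¬ TuringLe (gf b') (gf b) := by
    intro b b' h
    exact theta_incomp' (fun he => h (j.injective he))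
  set A : (O → Bool) → Set (ℕ → ℕ) :=
    fun x => {f | ∃ b : Bsub, leL b.1 x ∧ TuringLe (gf b) f} with hA
  have hsub : ∀ {x y}, leL x y → A x ⊆ A y := by
    rintro x y hxy f ⟨b, hb, ht⟩
    exact ⟨b, leL_trans hb hxy, ht⟩
  have hMle : ∀ {x y}, A x ⊆ A y → MuchnikLe (A y) (A x) :=
    fun hs f hf => ⟨f, hs hf, turingLe_refl f⟩
  have hsep : ∀ {x y}, ltL x y → ∃ f ∈ A y, ∀ h ∈ A x, ¬ TuringLe h f := by
    intro x y hxy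
    obtain ⟨w, hcnt, hxw, hwy⟩ := exists_witness hxy
    refine ⟨gf ⟨w, hcnt⟩, ⟨⟨w, hcnt⟩, hwy, turingLe_refl _⟩, ?_⟩
    rintro h ⟨b, hb, hgb⟩ hht
    have htr : TuringLe (gf b) (gf ⟨w, hcnt⟩) := turingLe_trans hgb hht
    have hne : (⟨w, hcnt⟩ : Bsub) ≠ b := by
      intro he
      have hlt : ltL b.1 w := leL_ltL_trans hb hxw
      rw [← he] at hlt
      exact ltL_irrefl w hlt
    exact anti ⟨w, hcnt⟩ b hne htr
  have hnotle : ∀ {x y}, ltL x y → ¬ MuchnikLe (A x) (A y) := by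
    intro x y hxy hle2
    obtain ⟨f, hf, hguard⟩ := hsep hxy
    obtain ⟨g, hg, hgt⟩ := hle2 f hf
    exact hguard g hg hgt
  have hrefl : ∀ x, MuchnikLe (A x) (A x) := fun x f hf => ⟨f, hf, turingLe_refl f⟩
  have hAinj : Function.Injective A := by
    intro x y he
    by_contra hne
    rcases ltL_total hne with h | h
    · refine hnotle h ?_
      rw [he]; exact hrefl y
    · refine hnotle h ?_
      rw [← he]; exact hrefl x
  refine ⟨Set.range A, ?_, ?_, ?_⟩
  · rw [Cardinal.mk_range_eq A hAinj, hCH0, ← Cardinal.power_def, Cardinal.mk_bool, mk_O]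
  · rintro Aa ⟨x, rfl⟩ Ab ⟨y, rfl⟩
    rcases eq_or_ne x y with rfl | hne
    · exact Or.inl (hrefl x)
    · rcases ltL_total hne with h | h
      · exact Or.inr (hMle (hsub (Or.inl h)))
      · exact Or.inl (hMle (hsub (Or.inl h)))
  · rintro Aa ⟨x, rfl⟩ Ab ⟨y, rfl⟩ hne hequiv
    have hxy : x ≠ y := fun he => hne (by rw [he])
    rcases ltL_total hxy with h | h
    · exact hnotle h hequiv.1
    · exact hnotle h hequiv.2

end Muchnik
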